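/- arXiv:2002.04725 — 2 statements merged into one kernel-verified Lean document; each statement's English description precedes it below -/
import Mathlib

section
/- For every δ ≥ 1, the function x ↦ φ(x; δ) = 2Φ(x) − Φ(x(1+δ)) − Φ(x(1−δ)) is strictly increasing on (0, ∞). -/
open Real MeasureTheory ProbabilityTheory Filter Topology

/-- The CDF of the standard normal distribution. -/
noncomputable def stdNormalCDF (x : ℝ) : ℝ := cdf (gaussianReal 0 1) x

/-- `phi δ x = 2Φ(x) − Φ(x(1+δ)) − Φ(x(1−δ))`. -/
noncomputable def phi (δ x : ℝ) : ℝ :=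
  2 * stdNormalCDF x - stdNormalCDF (x * (1 + δ)) - stdNormalCDF (x * (1 - δ))

lemma gpdf_eq (x : ℝ) :
    gaussianPDFReal 0 1 x = (Real.sqrt (2 * π))⁻¹ * Real.exp (-(x ^ 2) / 2) := by
  simp [gaussianPDFReal]

lemma gpdf_continuous : Continuous (gaussianPDFReal 0 1) := by
  have : gaussianPDFReal 0 1 = fun x => (Real.sqrt (2 * π))⁻¹ * Real.exp (-(x ^ 2) / 2) :=
    funext fun x => gpdf_eq x
  rw [this]
  exact continuous_const.mul (((continuous_pow 2).neg.div_const 2).rexp)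

lemma stdNormalCDF_eq (x : ℝ) :
    stdNormalCDF x = ∫ t in Set.Iic x, gaussianPDFReal 0 1 t := by
  rw [stdNormalCDF, cdf_eq_real, measureReal_def,
    gaussianReal_apply_eq_integral 0 one_ne_zero (Set.Iic x),
    ENNReal.toReal_ofReal]
  exact setIntegral_nonneg measurableSet_Iic fun t _ => gaussianPDFReal_nonneg 0 1 t

lemma stdNormalCDF_sub (a b : ℝ) :
    stdNormalCDF b - stdNormalCDF a = ∫ t in a..b, gaussianPDFReal 0 1 t := by
  rw [stdNormalCDF_eq, stdNormalCDF_eq]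
  exact intervalIntegral.integral_Iic_sub_Iic
    ((integrable_gaussianPDFReal 0 1).integrableOn)
    ((integrable_gaussianPDFReal 0 1).integrableOn)

lemma stdNormalCDF_sub_mul (a b c : ℝ) :
    stdNormalCDF (b * c) - stdNormalCDF (a * c)
      = c * ∫ t in a..b, gaussianPDFReal 0 1 (t * c) := by
  rw [stdNormalCDF_sub, intervalIntegral.mul_integral_comp_mul_right]

theorem phi_strictMono_of_one_le (δ : ℝ) (hδ : 1 ≤ δ) :
    StrictMonoOn (phi δ) (Set.Ioi (0 : ℝ)) := by
  intro x hx y hy hxy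
  rw [Set.mem_Ioi] at hx hy
  set g : ℝ → ℝ := gaussianPDFReal 0 1 with hg
  have hgc : Continuous g := gpdf_continuous
  set F : ℝ → ℝ := fun t =>
    2 * g t - (1 + δ) * g (t * (1 + δ)) - (1 - δ) * g (t * (1 - δ)) with hF
  have hc2 : Continuous fun t : ℝ => g (t * (1 + δ)) :=
    hgc.comp (continuous_id.mul continuous_const)
  have hc3 : Continuous fun t : ℝ => g (t * (1 - δ)) :=
    hgc.comp (continuous_id.mul continuous_const)
  have hFcont : Continuous F :=
    ((continuous_const.mul hgc).sub (continuous_const.mul hc2)).sub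
      (continuous_const.mul hc3)
  have key : phi δ y - phi δ x = ∫ t in x..y, F t := by
    have h1 := stdNormalCDF_sub x y
    have h2 := stdNormalCDF_sub_mul x y (1 + δ)
    have h3 := stdNormalCDF_sub_mul x y (1 - δ)
    have i1 : IntervalIntegrable g volume x y := hgc.intervalIntegrable x y
    have i2 : IntervalIntegrable (fun t => g (t * (1 + δ))) volume x y :=
      hc2.intervalIntegrable x y
    have i3 : IntervalIntegrable (fun t => g (t * (1 - δ))) volume x y :=
      hc3.intervalIntegrable x y
    have hsum : ∫ t in x..y, F t
        = 2 * (∫ t in x..y, g t) - (1 + δ) * (∫ t in x..y, g (t * (1 + δ)))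
          - (1 - δ) * (∫ t in x..y, g (t * (1 - δ))) := by
      rw [hF]
      rw [intervalIntegral.integral_sub ((i1.const_mul 2).sub (i2.const_mul (1 + δ)))
          (i3.const_mul (1 - δ)),
        intervalIntegral.integral_sub (i1.const_mul 2) (i2.const_mul (1 + δ)),
        intervalIntegral.integral_const_mul, intervalIntegral.integral_const_mul,
        intervalIntegral.integral_const_mul]
    rw [hsum, phi, phi, ← hg] at *
    rw [← h1]
    linarith [h2, h3]
  have hFpos : ∀ t ∈ Set.Ioo x y, 0 < F t := by
    intro t ht
    have htpos : 0 < t := lt_trans hx ht.1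
    set a : ℝ := δ - 1 with ha
    have ha0 : 0 ≤ a := by simp only [ha]; linarith
    rw [hF]
    simp only [hg, gpdf_eq]
    have e1 : (t * (1 + δ)) ^ 2 = (a + 2) ^ 2 * t ^ 2 := by rw [ha]; ring
    have e2 : (t * (1 - δ)) ^ 2 = a ^ 2 * t ^ 2 := by rw [ha]; ring
    rw [e1, e2]
    have hexp1 : Real.exp (-((a + 2) ^ 2 * t ^ 2) / 2) < Real.exp (-(t ^ 2) / 2) := by
      apply Real.exp_lt_exp.2
      nlinarith [sq_nonneg t, sq_nonneg a, mul_pos htpos htpos]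
    have hexp2 : Real.exp (-((a + 2) ^ 2 * t ^ 2) / 2) ≤ Real.exp (-(a ^ 2 * t ^ 2) / 2) := by
      apply Real.exp_le_exp.2
      nlinarith [sq_nonneg t]
    have hδa : 1 + δ = a + 2 := by rw [ha]; ring
    have hδa2 : 1 - δ = -a := by rw [ha]; ring
    rw [hδa, hδa2]
    have hp1 : 0 < Real.exp (-(t ^ 2) / 2) := Real.exp_pos _
    have hp2 : 0 < Real.exp (-(a ^ 2 * t ^ 2) / 2) := Real.exp_pos _
    have hinv : 0 < (Real.sqrt (2 * π))⁻¹ := by positivity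
    nlinarith [mul_le_mul_of_nonneg_left hexp2 ha0]
  have hpos : 0 < ∫ t in x..y, F t :=
    intervalIntegral.intervalIntegral_pos_of_pos_on
      (hFcont.intervalIntegrable x y) hFpos hxy
  linarith [key, hpos]
end

section
/- Under the Gaussian model setup, the generalization gap satisfies g_n ≥ 0 for every n ≥ 1. -/
open Real MeasureTheory ProbabilityTheory Filter Topology

lemma measurable_realSign : Measurable Real.sign := by
  have : Real.sign = fun r : ℝ => if r < 0 then (-1 : ℝ) else if 0 < r then 1 else 0 := by
    funext r; rfl
  rw [this]
  exact Measurable.ite (measurableSet_lt measurable_id measurable_const) measurable_const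
    (Measurable.ite (measurableSet_lt measurable_const measurable_id) measurable_const
      measurable_const)

lemma abs_realSign (x : ℝ) : |Real.sign x| ≤ 1 := by
  rcases lt_trichotomy x 0 with h | h | h
  · rw [Real.sign_of_neg h]; norm_num
  · rw [h, Real.sign_zero]; norm_num
  · rw [Real.sign_of_pos h]; norm_num

/-- The coordinatewise gap function equals an explicit indicator combination off `{ε, -ε}`. -/
lemma hfun_eq {ε : ℝ} (hε : 0 < ε) {x : ℝ} (h1 : x ≠ ε) (h2 : x ≠ -ε) :
    Real.sign x - Real.sign (x - ε * Real.sign x)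
      = 2 * (Set.Ioo 0 ε).indicator (fun _ => (1 : ℝ)) x
        - 2 * (Set.Ioo (-ε) 0).indicator (fun _ => (1 : ℝ)) x := by
  rcases lt_trichotomy x 0 with hx | hx | hx
  · rw [Real.sign_of_neg hx]
    rcases lt_trichotomy x (-ε) with h | h | h
    · rw [Real.sign_of_neg (by linarith)]
      rw [Set.indicator_of_notMem (by simp [Set.mem_Ioo]; intro; linarith),
        Set.indicator_of_notMem (by simp [Set.mem_Ioo]; intro; linarith)]
      ring
    · exact absurd h h2
    · rw [Real.sign_of_pos (by linarith)]
      rw [Set.indicator_of_notMem (by simp [Set.mem_Ioo]; intro; linarith),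
        Set.indicator_of_mem (by simp [Set.mem_Ioo]; exact ⟨h, hx⟩)]
      ring
  · subst hx
    simp [Real.sign_zero, Set.indicator_of_notMem, Set.mem_Ioo, hε, le_refl, lt_irrefl]
  · rw [Real.sign_of_pos hx]
    rcases lt_trichotomy x ε with h | h | h
    · rw [Real.sign_of_neg (by linarith)]
      rw [Set.indicator_of_mem (by simp [Set.mem_Ioo]; exact ⟨hx, h⟩),
        Set.indicator_of_notMem (by simp [Set.mem_Ioo]; intro; linarith)]
      ring
    · exact absurd h h1
    · rw [Real.sign_of_pos (by linarith)]
      rw [Set.indicator_of_notMem (by simp [Set.mem_Ioo]; intro; linarith),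
        Set.indicator_of_notMem (by simp [Set.mem_Ioo]; intro; linarith)]
      ring

lemma gaussian_Ioo_neg_le {m : ℝ} (hm : 0 ≤ m) {v : NNReal} (hv : v ≠ 0) {ε : ℝ} :
    gaussianReal m v (Set.Ioo (-ε) 0) ≤ gaussianReal m v (Set.Ioo 0 ε) := by
  -- reflect: the left side equals gaussianReal (-m) v (Ioo 0 ε)
  have hmap : (gaussianReal m v).map (fun x => (-1 : ℝ) * x)
      = gaussianReal (-m) v := by
    rw [ProbabilityTheory.gaussianReal_map_const_mul (-1)]
    congr 1
    · ring
    · ext; simp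
  have hrefl : gaussianReal m v (Set.Ioo (-ε) 0) = gaussianReal (-m) v (Set.Ioo 0 ε) := by
    rw [← hmap, Measure.map_apply (by fun_prop) measurableSet_Ioo]
    congr 1
    ext x
    simp only [Set.mem_preimage, Set.mem_Ioo]
    constructor
    · rintro ⟨h1, h2⟩; constructor <;> linarith
    · rintro ⟨h1, h2⟩; constructor <;> linarith
  rw [hrefl, gaussianReal_apply _ hv, gaussianReal_apply _ hv]
  refine setLIntegral_mono (measurable_gaussianPDF _ _) fun x hx => ?_
  simp only [Set.mem_Ioo] at hx
  unfold gaussianPDF gaussianPDFReal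
  refine ENNReal.ofReal_le_ofReal ?_
  refine mul_le_mul_of_nonneg_left ?_ (by positivity)
  refine Real.exp_le_exp.mpr ?_
  have hvpos : (0 : ℝ) < v := by positivity
  rw [div_le_div_iff_of_pos_right (by linarith)]
  nlinarith [hx.1, hm]

/-- Key one-dimensional lemma: the expected coordinate gap is nonnegative. -/
lemma key_nonneg {m : ℝ} (hm : 0 ≤ m) {v : NNReal} (hv : v ≠ 0) {ε : ℝ} (hε : 0 < ε) :
    0 ≤ ∫ x, (Real.sign x - Real.sign (x - ε * Real.sign x)) ∂(gaussianReal m v) := by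
  set ν := gaussianReal m v with hν
  have hac : ν ≪ (volume : Measure ℝ) := gaussianReal_absolutelyContinuous _ hv
  have hae : ∀ᵐ x ∂ν, x ≠ ε ∧ x ≠ -ε := by
    have h1 : ν {ε} = 0 := hac (measure_singleton ε)
    have h2 : ν {(-ε)} = 0 := hac (measure_singleton (-ε))
    filter_upwards [measure_eq_zero_iff_ae_notMem.mp h1, measure_eq_zero_iff_ae_notMem.mp h2]
      with x hx1 hx2
    exact ⟨hx1, hx2⟩
  have heq : (fun x => Real.sign x - Real.sign (x - ε * Real.sign x))
      =ᵐ[ν] fun x => 2 * (Set.Ioo 0 ε).indicator (fun _ => (1 : ℝ)) x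
        - 2 * (Set.Ioo (-ε) 0).indicator (fun _ => (1 : ℝ)) x := by
    filter_upwards [hae] with x hx
    exact hfun_eq hε hx.1 hx.2
  rw [integral_congr_ae heq]
  have hint1 : Integrable ((Set.Ioo (0:ℝ) ε).indicator (fun _ => (1 : ℝ))) ν :=
    (integrable_const (1 : ℝ)).indicator measurableSet_Ioo
  have hint2 : Integrable ((Set.Ioo (-ε) (0:ℝ)).indicator (fun _ => (1 : ℝ))) ν :=
    (integrable_const (1 : ℝ)).indicator measurableSet_Ioo
  rw [integral_sub (hint1.const_mul 2) (hint2.const_mul 2), integral_const_mul,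
    integral_const_mul, integral_indicator_const _ measurableSet_Ioo,
    integral_indicator_const _ measurableSet_Ioo]
  simp only [smul_eq_mul, mul_one]
  have hle := gaussian_Ioo_neg_le hm hv (ε := ε)
  have := ENNReal.toReal_mono (measure_ne_top ν _) hle
  change 0 ≤ 2 * (ν (Set.Ioo 0 ε)).toReal - 2 * (gaussianReal m v (Set.Ioo (-ε) 0)).toReal
  linarith

lemma map_eval_pi {d : ℕ} (κ : Fin d → Measure ℝ) [∀ i, IsProbabilityMeasure (κ i)]
    (j : Fin d) : (Measure.pi κ).map (fun u => u j) = κ j := by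
  ext s hs
  rw [Measure.map_apply (measurable_pi_apply j) hs]
  have : (fun u : Fin d → ℝ => u j) ⁻¹' s
      = Set.pi Set.univ (Function.update (fun _ => Set.univ) j s) := by
    rw [← Set.eval_preimage]
  rw [this, Measure.pi_pi]
  rw [Fintype.prod_eq_single j fun i hi => by
    rw [Function.update_of_ne hi]; exact measure_univ]
  rw [Function.update_self]

/-- Generalization gap `g_n = W · E[⟨sign(u) − sign(u − ε·sign(u)), μ⟩]` in the Gaussian
model, where `u` has independent coordinates `u(j) ~ N(μ(j), σ(j)²/n)`. -/
noncomputable def gaussGap (d : ℕ) (W ε : ℝ) (μ σ : Fin d → ℝ) (n : ℕ) : ℝ :=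
  W * ∫ u : Fin d → ℝ,
      (∑ j, (Real.sign (u j) - Real.sign (u j - ε * Real.sign (u j))) * μ j)
    ∂(Measure.pi fun j => gaussianReal (μ j) (Real.toNNReal ((σ j) ^ 2 / n)))

theorem gaussGap_nonneg (d : ℕ) (W ε : ℝ) (μ σ : Fin d → ℝ)
    (hW : 0 < W) (hε : 0 < ε) (hμ : ∀ j, 0 ≤ μ j) (hσ : ∀ j, 0 < σ j)
    (n : ℕ) (hn : 1 ≤ n) :
    0 ≤ gaussGap d W ε μ σ n := by
  unfold gaussGap
  refine mul_nonneg hW.le ?_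
  set κ : Fin d → Measure ℝ :=
    fun j => gaussianReal (μ j) (Real.toNNReal ((σ j) ^ 2 / n)) with hκ
  haveI : ∀ j, IsProbabilityMeasure (κ j) := fun j => by
    rw [hκ]; infer_instance
  have hvne : ∀ j, (Real.toNNReal ((σ j) ^ 2 / n)) ≠ 0 := by
    intro j
    have hnpos : (0 : ℝ) < n := by exact_mod_cast hn
    have hσj : (0:ℝ) < σ j := hσ j
    have : (0 : ℝ) < (σ j) ^ 2 / n := div_pos (pow_pos hσj 2) hnpos
    simp [Real.toNNReal_eq_zero, not_le, this]
  have hmeas : Measurable fun x : ℝ => Real.sign x - Real.sign (x - ε * Real.sign x) :=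
    measurable_realSign.sub
      (measurable_realSign.comp (measurable_id.sub (measurable_realSign.const_mul ε)))
  have hint : ∀ j : Fin d, Integrable
      (fun u : Fin d → ℝ =>
        (Real.sign (u j) - Real.sign (u j - ε * Real.sign (u j))) * μ j) (Measure.pi κ) := by
    intro j
    refine Integrable.mono' (integrable_const (2 * |μ j|))
      (((hmeas.comp (measurable_pi_apply j)).mul_const (μ j)).aestronglyMeasurable)
      (ae_of_all _ fun u => ?_)
    rw [Real.norm_eq_abs, abs_mul]
    have h1 : |Real.sign (u j) - Real.sign (u j - ε * Real.sign (u j))| ≤ 2 := by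
      calc |Real.sign (u j) - Real.sign (u j - ε * Real.sign (u j))|
          ≤ |Real.sign (u j)| + |Real.sign (u j - ε * Real.sign (u j))| := abs_sub _ _
        _ ≤ 2 := by
            have := abs_realSign (u j)
            have := abs_realSign (u j - ε * Real.sign (u j))
            linarith
    nlinarith [abs_nonneg (μ j), abs_nonneg (Real.sign (u j) - Real.sign (u j - ε * Real.sign (u j)))]
  rw [integral_finset_sum _ fun j _ => hint j]
  refine Finset.sum_nonneg fun j _ => ?_
  have hcoord : (∫ u : Fin d → ℝ,
      (Real.sign (u j) - Real.sign (u j - ε * Real.sign (u j))) * μ j ∂(Measure.pi κ))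
      = (∫ x, (Real.sign x - Real.sign (x - ε * Real.sign x)) ∂(κ j)) * μ j := by
    rw [← integral_mul_const]
    rw [← map_eval_pi κ j, integral_map (measurable_pi_apply j).aemeasurable
      ((hmeas.mul_const (μ j)).aestronglyMeasurable)]
  rw [hcoord]
  exact mul_nonneg (key_nonneg (hμ j) (hvne j) hε) (hμ j)
end
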